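/- Let S be a finite set of primes, p ∈ S, and A ∈ GL_m(ℤ[1/S]). Fix an embedding ℚ̄ ↪ ℂ_p and assume every eigenvalue λ of A satisfies |λ|_p ≠ 1. Then there exists a Laurent polynomial g ∈ ℤ[t^{±1}] with integer coefficients such that g(A) = p^{-1}·I in M_m(ℤ[1/S]). -/

import Mathlib

open Polynomial

/-- The ring ℤ[1/S] of S-integers of ℚ: the subring of ℚ generated by the
inverses of the primes in S (it automatically contains ℤ). -/
def ZinvS (S : Finset ℕ) : Subring ℚ :=
  Subring.closure {x : ℚ | ∃ l ∈ S, x = (l : ℚ)⁻¹}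

/-!
STATEMENT 10: Let S be a finite set of primes, p ∈ S, and A ∈ GL_m(ℤ[1/S]).
Fix an embedding ℚ̄ ↪ ℂ_p and assume every eigenvalue λ of A (i.e. every root in
ℚ̄ of its characteristic polynomial) satisfies |λ|_p ≠ 1.  Then there is a
Laurent polynomial g = ∑_i c_i t^i ∈ ℤ[t^{±1}] with g(A) = p⁻¹·I.

An embedding ℚ̄ ↪ ℂ_p is recorded by the data it induces on ℚ̄, namely a
nonarchimedean multiplicative absolute value w : ℚ̄ → ℝ extending the p-adic
absolute value of ℚ (normalized by w(p) = p⁻¹).  A Laurent polynomial with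
integer coefficients is recorded by its finitely supported coefficient family
c : ℤ →₀ ℤ, and g(A) = ∑_i c_i A^i, using powers of A in GL_m(ℤ[1/S]).
-/

section W
variable {K : Type*} [CommRing K] (w : K → ℝ)
variable (h0 : w 0 = 0) (h1 : w 1 = 1)
  (hmul : ∀ x y, w (x * y) = w x * w y)
  (hadd : ∀ x y, w (x + y) ≤ max (w x) (w y))
  (hnn : ∀ x, 0 ≤ w x)

include h1 hmul hnn in
lemma w_neg (x : K) : w (-x) = w x := by
  have hm1 : w (-1 : K) = 1 := by
    have h2 : w ((-1 : K) * (-1)) = w (-1) * w (-1) := hmul _ _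
    rw [neg_mul_neg, one_mul, h1] at h2
    nlinarith [hnn (-1 : K)]
  calc w (-x) = w ((-1) * x) := by rw [neg_one_mul]
  _ = w (-1) * w x := hmul _ _
  _ = w x := by rw [hm1, one_mul]

include h1 hmul hadd hnn in
lemma w_add_eq {x y : K} (h : w y < w x) : w (x + y) = w x := by
  have hle : w (x + y) ≤ w x := le_trans (hadd x y) (by simp [le_of_lt h])
  refine le_antisymm hle ?_
  have h2 : w x ≤ max (w (x + y)) (w y) := by
    have := hadd (x + y) (-y)
    rwa [add_neg_cancel_right, w_neg w h1 hmul hnn] at this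
  rcases max_cases (w (x + y)) (w y) with ⟨he, _⟩ | ⟨he, _⟩
  · rwa [he] at h2
  · rw [he] at h2; exact absurd (lt_of_le_of_lt h2 h) (lt_irrefl _)

include h1 hmul hadd hnn in
lemma w_sub_eq {x y : K} (h : w y < w x) : w (x - y) = w x := by
  rw [sub_eq_add_neg]
  exact w_add_eq w h1 hmul hadd hnn (by rwa [w_neg w h1 hmul hnn])

include h1 hmul hadd hnn in
lemma w_sub_eq' {x y : K} (h : w x < w y) : w (x - y) = w y := by
  have : w (-(x - y)) = w y := by rw [neg_sub]; exact w_sub_eq w h1 hmul hadd hnn h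
  rwa [w_neg w h1 hmul hnn] at this


include h1 hmul hadd hnn in
lemma w_sub_le (x y : K) : w (x - y) ≤ max (w x) (w y) := by
  rw [sub_eq_add_neg]
  have := hadd x (-y)
  rwa [w_neg w h1 hmul hnn] at this

include h0 h1 hmul hadd hnn in
lemma newton (s : Multiset K) (hs : ∀ x ∈ s, w x ≠ 1) :
    w (((s.map fun x => X - C x).prod).coeff
        (Multiset.card (s.filter fun x => w x < 1)))
      = ((s.filter fun x => 1 < w x).map w).prod ∧
    ∀ j, j ≠ Multiset.card (s.filter fun x => w x < 1) →
      w (((s.map fun x => X - C x).prod).coeff j)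
        < ((s.filter fun x => 1 < w x).map w).prod := by
  induction s using Multiset.induction_on with
  | empty =>
      constructor
      · simpa using h1
      · intro j hj
        simp only [Multiset.filter_zero, Multiset.card_zero, Multiset.map_zero,
          Multiset.prod_zero] at hj ⊢
        rw [Polynomial.coeff_one, if_neg (by omega : ¬ j = 0), h0]
        norm_num
  | cons x s ih =>
      have hx : w x ≠ 1 := hs x (Multiset.mem_cons_self x s)
      have hs' : ∀ y ∈ s, w y ≠ 1 := fun y hy => hs y (Multiset.mem_cons_of_mem hy)
      obtain ⟨hA, hB⟩ := ih hs'
      set f := (s.map fun x => X - C x).prod with hf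
      set a := Multiset.card (s.filter fun x => w x < 1) with ha
      set P := ((s.filter fun x => 1 < w x).map w).prod with hP
      have hP0 : 0 < P := by
        apply Multiset.prod_pos
        intro y hy
        obtain ⟨z, hz, rfl⟩ := Multiset.mem_map.mp hy
        have := (Multiset.mem_filter.mp hz).2
        linarith
      have hle : ∀ j, w (f.coeff j) ≤ P := by
        intro j
        by_cases hj : j = a
        · rw [hj, hA]
        · exact le_of_lt (hB j hj)
      have hprod : ((x ::ₘ s).map fun y => X - C y).prod = f * (X - C x) := by
        rw [Multiset.map_cons, Multiset.prod_cons, mul_comm]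
      have hc0 : (f * (X - C x)).coeff 0 = f.coeff 0 * (-x) := by
        rw [Polynomial.mul_coeff_zero]; simp
      rcases lt_or_gt_of_ne hx with hlt | hgt
      · -- w x < 1 case
        have hfa : Multiset.card ((x ::ₘ s).filter fun y => w y < 1) = a + 1 := by
          rw [Multiset.filter_cons, if_pos hlt]
          simp
          rfl
        have hfP : (((x ::ₘ s).filter fun y => 1 < w y).map w).prod = P := by
          rw [Multiset.filter_cons, if_neg (by linarith : ¬ (1:ℝ) < w x)]
          simp
          rfl
        rw [hfa, hfP, hprod]
        have key : ∀ j, j ≠ a + 1 → w ((f * (X - C x)).coeff j) < P := by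
          intro j hj
          match j with
          | 0 =>
            rw [hc0, hmul, w_neg w h1 hmul hnn]
            calc w (f.coeff 0) * w x ≤ P * w x :=
                  mul_le_mul_of_nonneg_right (hle 0) (hnn x)
            _ < P * 1 := by
                  exact mul_lt_mul_of_pos_left hlt hP0
            _ = P := mul_one P
          | (k+1) =>
            rw [Polynomial.coeff_mul_X_sub_C]
            have hk : k ≠ a := fun h => hj (by rw [h])
            refine lt_of_le_of_lt (w_sub_le w h1 hmul hadd hnn _ _) (max_lt (hB k hk) ?_)
            rw [hmul]
            calc w (f.coeff (k+1)) * w x ≤ P * w x :=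
                  mul_le_mul_of_nonneg_right (hle _) (hnn x)
            _ < P * 1 := mul_lt_mul_of_pos_left hlt hP0
            _ = P := mul_one P
        constructor
        · rw [Polynomial.coeff_mul_X_sub_C]
          have h2 : w (f.coeff (a+1) * x) < w (f.coeff a) := by
            rw [hA, hmul]  -- note
            calc w (f.coeff (a+1)) * w x ≤ P * w x :=
                  mul_le_mul_of_nonneg_right (hle _) (hnn x)
            _ < P * 1 := mul_lt_mul_of_pos_left hlt hP0
            _ = P := mul_one P
          rw [w_sub_eq w h1 hmul hadd hnn h2, hA]
        · exact key
      · -- 1 < w x case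
        have hfa : Multiset.card ((x ::ₘ s).filter fun y => w y < 1) = a := by
          rw [Multiset.filter_cons, if_neg (by linarith : ¬ w x < 1)]
          simp
          rfl
        have hfP : (((x ::ₘ s).filter fun y => 1 < w y).map w).prod = w x * P := by
          rw [Multiset.filter_cons, if_pos hgt]
          simp
          exact Or.inl rfl
        have hPlt : P < w x * P := by
          nlinarith
        rw [hfa, hfP, hprod]
        constructor
        · match a, ha with
          | 0, ha =>
            rw [hc0, hmul, w_neg w h1 hmul hnn, hA, mul_comm]
          | (b+1), ha =>
            rw [Polynomial.coeff_mul_X_sub_C]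
            have h2 : w (f.coeff b) < w (f.coeff (b+1) * x) := by
              rw [hmul, hA]
              calc w (f.coeff b) < P := hB b (by omega)
              _ < P * w x := by nlinarith
            rw [w_sub_eq' w h1 hmul hadd hnn h2, hmul, hA, mul_comm]
        · intro j hj
          match j with
          | 0 =>
            rw [hc0, hmul, w_neg w h1 hmul hnn]
            calc w (f.coeff 0) * w x < P * w x :=
                  mul_lt_mul_of_pos_right (hB 0 hj) (by linarith)
            _ = w x * P := mul_comm _ _
          | (k+1) =>
            rw [Polynomial.coeff_mul_X_sub_C]
            refine lt_of_le_of_lt (w_sub_le w h1 hmul hadd hnn _ _) (max_lt ?_ ?_)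
            · calc w (f.coeff k) ≤ P := hle k
              _ < w x * P := hPlt
            · rw [hmul]
              calc w (f.coeff (k+1)) * w x < P * w x :=
                    mul_lt_mul_of_pos_right (hB _ hj) (by linarith)
              _ = w x * P := mul_comm _ _
        
end W

theorem exists_laurent_poly_eval_eq_inv_p_smul_one
    (S : Finset ℕ) (hS : ∀ l ∈ S, l.Prime) (p : ℕ) (hpS : p ∈ S) (m : ℕ)
    (A : (Matrix (Fin m) (Fin m) (ZinvS S))ˣ)
    (w : AlgebraicClosure ℚ → ℝ)
    (hw_nonneg : ∀ x, 0 ≤ w x)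
    (hw_mul : ∀ x y, w (x * y) = w x * w y)
    (hw_add : ∀ x y, w (x + y) ≤ max (w x) (w y))
    (hw_rat : ∀ q : ℚ, w (algebraMap ℚ (AlgebraicClosure ℚ) q) = (padicNorm p q : ℝ))
    (heig : ∀ x : AlgebraicClosure ℚ,
      ((A.val.map fun a => algebraMap ℚ (AlgebraicClosure ℚ) (a : ℚ)).charpoly).IsRoot x →
      w x ≠ 1) :
    ∃ c : ℤ →₀ ℤ,
      (c.sum fun i a => a • ((A ^ i : (Matrix (Fin m) (Fin m) (ZinvS S))ˣ) : Matrix (Fin m) (Fin m) (ZinvS S))) =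
        Matrix.scalar (Fin m)
          (⟨(p : ℚ)⁻¹, Subring.subset_closure ⟨p, hpS, rfl⟩⟩ : ZinvS S) := by
  classical
  have hp : p.Prime := hS p hpS
  haveI : Fact p.Prime := ⟨hp⟩
  have h0 : w 0 = 0 := by simpa [padicNorm.zero] using hw_rat 0
  have h1 : w 1 = 1 := by simpa using hw_rat 1
  set ψ : ℚ →+* AlgebraicClosure ℚ := algebraMap ℚ (AlgebraicClosure ℚ) with hψ
  set φ : (ZinvS S) →+* ℚ := (ZinvS S).subtype with hφ
  set B : Matrix (Fin m) (Fin m) ℚ := A.val.map φ with hB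
  set f : ℚ[X] := B.charpoly with hfdef
  set F : Polynomial (AlgebraicClosure ℚ) := f.map ψ with hFdef
  -- the matrix in heig is B mapped along ψ
  have hmat : (A.val.map fun a => ψ (a : ℚ)) = B.map ψ := by
    rw [hB, Matrix.map_map]; rfl
  have hF : (A.val.map fun a => ψ (a : ℚ)).charpoly = F := by
    rw [hmat, Matrix.charpoly_map]
  have hFmonic : F.Monic := (Matrix.charpoly_monic B).map ψ
  have hsplit : F = (F.roots.map fun x => X - C x).prod :=
    (IsAlgClosed.splits F).eq_prod_roots_of_monic hFmonic
  have hroots : ∀ x ∈ F.roots, w x ≠ 1 := by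
    intro x hx
    exact heig x (by rw [hF]; exact isRoot_of_mem_roots hx)
  obtain ⟨hNA, hNB⟩ := newton w h0 h1 hw_mul hw_add hw_nonneg F.roots hroots
  set a := Multiset.card (F.roots.filter fun x => w x < 1) with hadef
  set P := ((F.roots.filter fun x => 1 < w x).map w).prod with hPdef
  have hP0 : 0 < P := by
    apply Multiset.prod_pos
    intro y hy
    obtain ⟨z, hz, rfl⟩ := Multiset.mem_map.mp hy
    have := (Multiset.mem_filter.mp hz).2
    linarith
  -- coefficients of F are ψ-images of coefficients of f
  have hcoe : ∀ j, w (F.coeff j) = (padicNorm p (f.coeff j) : ℝ) := by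
    intro j
    rw [hFdef, Polynomial.coeff_map, hw_rat]
  have hwa : (padicNorm p (f.coeff a) : ℝ) = P := by
    have := hNA
    rw [← hsplit] at this
    rw [← hcoe]
    exact this
  have hwb : ∀ j, j ≠ a → (padicNorm p (f.coeff j) : ℝ) < P := by
    intro j hj
    have := hNB j hj
    rw [← hsplit] at this
    rw [← hcoe]
    exact this
  have hnorm_lt : ∀ j, j ≠ a → padicNorm p (f.coeff j) < padicNorm p (f.coeff a) := by
    intro j hj
    have := hwb j hj
    rw [← hwa] at this
    exact_mod_cast this
  have hanez : f.coeff a ≠ 0 := by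
    intro h
    rw [h] at hwa
    simp [padicNorm.zero] at hwa
    rw [← hwa] at hP0
    exact lt_irrefl _ hP0
  have hdeg : f.natDegree = m := by
    rw [hfdef, Matrix.charpoly_natDegree_eq_dim, Fintype.card_fin]
  have ha_le : a ≤ m := by
    calc a ≤ Multiset.card F.roots := Multiset.card_le_card (Multiset.filter_le _ _)
    _ ≤ F.natDegree := Polynomial.card_roots' F
    _ = f.natDegree := Polynomial.natDegree_map_eq_of_injective ψ.injective f
    _ = m := hdeg
  -- clear denominators
  set d₀ : ℕ := ∏ j ∈ Finset.range (m+1), (f.coeff j).den with hd0def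
  have hd0pos : 0 < d₀ := Finset.prod_pos (fun j _ => (f.coeff j).pos)
  set M : ℕ → ℤ := fun j => ((d₀ / (f.coeff j).den : ℕ) : ℤ) * (f.coeff j).num with hMdef
  have hM : ∀ j, j ≤ m → ((M j : ℚ)) = (d₀ : ℚ) * f.coeff j := by
    intro j hj
    have hdvd : (f.coeff j).den ∣ d₀ :=
      Finset.dvd_prod_of_mem _ (Finset.mem_range.mpr (by omega))
    have hmulden : ((d₀ / (f.coeff j).den : ℕ) : ℚ) * ((f.coeff j).den : ℚ) = (d₀:ℚ) := by
      rw [← Nat.cast_mul, Nat.div_mul_cancel hdvd]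
    have h2 : ((f.coeff j).num : ℚ) = f.coeff j * ((f.coeff j).den : ℚ) :=
      (Rat.mul_den_eq_num _).symm
    rw [hMdef]
    push_cast
    rw [h2]
    calc ((d₀ / (f.coeff j).den : ℕ) : ℚ) * (f.coeff j * ((f.coeff j).den : ℚ))
        = (((d₀ / (f.coeff j).den : ℕ) : ℚ) * ((f.coeff j).den : ℚ)) * f.coeff j := by ring
    _ = (d₀:ℚ) * f.coeff j := by rw [hmulden]
  have hd0ne : (d₀ : ℚ) ≠ 0 := by exact_mod_cast hd0pos.ne'
  have hd0norm_pos : 0 < padicNorm p (d₀ : ℚ) := by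
    exact lt_of_le_of_ne (padicNorm.nonneg (p := p) (d₀:ℚ))
      (Ne.symm (padicNorm.nonzero hd0ne))
  have hMnorm : ∀ j, j ≤ m →
      padicNorm p (M j) = padicNorm p (d₀:ℚ) * padicNorm p (f.coeff j) := by
    intro j hj
    rw [hM j hj, padicNorm.mul]
  have hMa_ne : M a ≠ 0 := by
    intro h
    apply hanez
    have := hM a ha_le
    rw [h] at this
    have h2 : (d₀:ℚ) * f.coeff a = 0 := by rw [← this]; simp
    rcases mul_eq_zero.mp h2 with h3 | h3
    · exact absurd h3 hd0ne
    · exact h3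
  set w' : ℕ := padicValInt p (M a) with hw'def
  have hMa_norm : padicNorm p (M a) = (p:ℚ) ^ (-(w' : ℤ)) := by
    rw [padicNorm.eq_zpow_of_nonzero (by exact_mod_cast hMa_ne), padicValRat.of_int, hw'def]
  have hp1 : (1:ℚ) < (p:ℚ) := by exact_mod_cast hp.one_lt
  have hcastpow : ∀ n : ℕ, ((p:ℤ)^n) = (((p^n : ℕ)) : ℤ) := by intro n; push_cast; ring
  have hdvdA : ∀ j, j ≤ m → ((p:ℤ)^w') ∣ M j := by
    intro j hj
    rw [hcastpow, padicNorm.dvd_iff_norm_le]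
    by_cases hja : j = a
    · rw [hja, hMa_norm]
    · calc padicNorm p (M j) = padicNorm p (d₀:ℚ) * padicNorm p (f.coeff j) := hMnorm j hj
      _ ≤ padicNorm p (d₀:ℚ) * padicNorm p (f.coeff a) :=
          mul_le_mul_of_nonneg_left (le_of_lt (hnorm_lt j hja)) (le_of_lt hd0norm_pos)
      _ = padicNorm p (M a) := (hMnorm a ha_le).symm
      _ = (p:ℚ) ^ (-(w' : ℤ)) := hMa_norm
  have hdvdB : ∀ j, j ≤ m → j ≠ a → ((p:ℤ)^(w'+1)) ∣ M j := by
    intro j hj hja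
    by_cases hMj : M j = 0
    · rw [hMj]; exact dvd_zero _
    · rw [hcastpow, padicNorm.dvd_iff_norm_le]
      have hstrict : padicNorm p (M j) < (p:ℚ) ^ (-(w' : ℤ)) := by
        calc padicNorm p (M j) = padicNorm p (d₀:ℚ) * padicNorm p (f.coeff j) := hMnorm j hj
        _ < padicNorm p (d₀:ℚ) * padicNorm p (f.coeff a) :=
            mul_lt_mul_of_pos_left (hnorm_lt j hja) hd0norm_pos
        _ = (p:ℚ) ^ (-(w' : ℤ)) := by rw [← hMnorm a ha_le, hMa_norm]
      set vj : ℕ := padicValInt p (M j) with hvjdef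
      have hMj_norm : padicNorm p (M j) = (p:ℚ) ^ (-(vj : ℤ)) := by
        rw [padicNorm.eq_zpow_of_nonzero (by exact_mod_cast hMj), padicValRat.of_int, hvjdef]
      rw [hMj_norm] at hstrict ⊢
      have hlt2 : -(vj:ℤ) < -(w':ℤ) := (zpow_lt_zpow_iff_right₀ hp1).mp hstrict
      have : -(vj:ℤ) ≤ -((w'+1 : ℕ):ℤ) := by push_cast; omega
      exact (zpow_le_zpow_iff_right₀ hp1).mpr this
  set z : ℕ → ℤ := fun j => M j / (p:ℤ)^w' with hzdef
  have hz : ∀ j, j ≤ m → ((p:ℤ)^w') * z j = M j := fun j hj =>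
    Int.mul_ediv_cancel' (hdvdA j hj)
  have hppow_ne : ((p:ℤ)^w') ≠ 0 := pow_ne_zero _ (by exact_mod_cast hp.ne_zero)
  have hpz : ∀ j, j ≤ m → j ≠ a → (p:ℤ) ∣ z j := by
    intro j hj hja
    have h2 : ((p:ℤ)^w') * ((p:ℤ) * (M j / (p:ℤ)^(w'+1))) = ((p:ℤ)^w') * z j := by
      rw [hz j hj]
      have h3 := Int.ediv_mul_cancel (hdvdB j hj hja)
      calc ((p:ℤ)^w') * ((p:ℤ) * (M j / (p:ℤ)^(w'+1)))
          = (M j / (p:ℤ)^(w'+1)) * (p:ℤ)^(w'+1) := by ring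
      _ = M j := h3
    exact ⟨_, (mul_left_cancel₀ hppow_ne h2).symm⟩
  have hpza : ¬ (p:ℤ) ∣ z a := by
    intro hdvd
    have hd2 : (p:ℤ)^(w'+1) ∣ M a := by
      rw [← hz a ha_le, pow_succ]
      obtain ⟨c, hc⟩ := hdvd
      exact ⟨c, by rw [hc]; ring⟩
    rw [hcastpow, padicNorm.dvd_iff_norm_le, hMa_norm] at hd2
    have : -((w':ℤ)) ≤ -((w'+1:ℕ):ℤ) := (zpow_le_zpow_iff_right₀ hp1).mp hd2
    push_cast at this
    omega
  -- Cayley–Hamilton over ℚ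
  have hCH : ∑ j ∈ Finset.range (m+1), f.coeff j • B ^ j = 0 := by
    have hch := Matrix.aeval_self_charpoly B
    rw [show B.charpoly = f from rfl, Polynomial.aeval_eq_sum_range, hdeg] at hch
    exact hch
  have hZsum : ∑ j ∈ Finset.range (m+1), (z j : ℚ) • B ^ j = 0 := by
    have hscaled : ((p:ℚ)^w') • (∑ j ∈ Finset.range (m+1), (z j : ℚ) • B ^ j)
        = (d₀:ℚ) • (∑ j ∈ Finset.range (m+1), f.coeff j • B ^ j) := by
      rw [Finset.smul_sum, Finset.smul_sum]
      refine Finset.sum_congr rfl ?_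
      intro j hj
      rw [smul_smul, smul_smul]
      congr 1
      have hj' : j ≤ m := by
        have := Finset.mem_range.mp hj; omega
      calc (p:ℚ)^w' * (z j:ℚ) = ((((p:ℤ)^w') * z j : ℤ) : ℚ) := by push_cast; ring
      _ = ((M j : ℤ):ℚ) := by rw [hz j hj']
      _ = (d₀:ℚ) * f.coeff j := hM j hj'
    rw [hCH, smul_zero] at hscaled
    have hpw : ((p:ℚ)^w') ≠ 0 := pow_ne_zero _ (by exact_mod_cast hp.ne_zero)
    exact (smul_eq_zero.mp hscaled).resolve_left hpw
  set erA := (Finset.range (m+1)).erase a with herA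
  have haMem : a ∈ Finset.range (m+1) := Finset.mem_range.mpr (by omega)
  have hsplitsum : (z a : ℚ) • B ^ a + ∑ j ∈ erA, (z j : ℚ) • B ^ j = 0 := by
    rw [herA, Finset.add_sum_erase _ (fun j => (z j : ℚ) • B ^ j) haMem]
    exact hZsum
  set y : ℕ → ℤ := fun j => z j / p with hydef
  have hyz : ∀ j ∈ erA, (p:ℤ) * y j = z j := by
    intro j hj
    obtain ⟨hne, hmem⟩ := Finset.mem_erase.mp hj
    exact Int.mul_ediv_cancel' (hpz j (by have := Finset.mem_range.mp hmem; omega) hne)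
  -- Bezout
  have hpZ : Prime (p:ℤ) := Nat.prime_iff_prime_int.mp hp
  have hcop : IsCoprime (p:ℤ) (z a) := hpZ.coprime_iff_not_dvd.mpr hpza
  obtain ⟨v, u, hvu⟩ := hcop
  set T : Matrix (Fin m) (Fin m) ℚ :=
    (v:ℚ) • B^a - (u:ℚ) • ∑ j ∈ erA, (y j:ℚ) • B^j with hTdef
  have hsum2 : ∑ j ∈ erA, (z j : ℚ) • B ^ j = (p:ℚ) • ∑ j ∈ erA, (y j : ℚ) • B ^ j := by
    rw [Finset.smul_sum]
    refine Finset.sum_congr rfl ?_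
    intro j hj
    rw [smul_smul]
    congr 1
    have := hyz j hj
    push_cast [← this]
    ring
  have hBa : B ^ a = (p:ℚ) • T := by
    have h1' : B ^ a = ((v * p + u * z a : ℤ) : ℚ) • B ^ a := by
      rw [hvu]; simp
    calc B ^ a = ((v * p + u * z a : ℤ) : ℚ) • B ^ a := h1'
    _ = ((v*p : ℤ):ℚ) • B^a + (u:ℚ) • ((z a:ℚ) • B^a) := by
        push_cast
        rw [add_smul, smul_smul]
    _ = ((v*p : ℤ):ℚ) • B^a + (u:ℚ) • (- ∑ j ∈ erA, (z j : ℚ) • B ^ j) := by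
        rw [eq_neg_of_add_eq_zero_left hsplitsum]
    _ = ((v*p : ℤ):ℚ) • B^a + (u:ℚ) • (- ((p:ℚ) • ∑ j ∈ erA, (y j : ℚ) • B ^ j)) := by
        rw [hsum2]
    _ = (p:ℚ) • T := by
        rw [hTdef]
        push_cast
        module
  -- final assembly
  set Φ : Matrix (Fin m) (Fin m) (ZinvS S) →+* Matrix (Fin m) (Fin m) ℚ :=
    φ.mapMatrix with hΦdef
  set 𝔅 : (Matrix (Fin m) (Fin m) ℚ)ˣ := Units.map Φ.toMonoidHom A with h𝔅
  have h𝔅val : (𝔅 : Matrix (Fin m) (Fin m) ℚ) = B := rfl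
  have hΦinj : Function.Injective Φ := by
    have := Matrix.map_injective (α := (ZinvS S)) (β := ℚ) (m := Fin m) (n := Fin m)
      (f := φ) Subtype.coe_injective
    exact this
  have hΦpow : ∀ i : ℤ, Φ (((A ^ i : (Matrix (Fin m) (Fin m) (ZinvS S))ˣ) :
      Matrix (Fin m) (Fin m) (ZinvS S))) = ((𝔅 ^ i : (Matrix (Fin m) (Fin m) ℚ)ˣ) :
      Matrix (Fin m) (Fin m) ℚ) := by
    intro i
    rw [h𝔅, ← map_zpow (Units.map Φ.toMonoidHom) A i]
    rfl
  set c : ℤ →₀ ℤ :=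
    Finsupp.single 0 v - ∑ j ∈ erA, Finsupp.single ((j:ℤ) - (a:ℤ)) (u * y j) with hcdef
  refine ⟨c, ?_⟩
  set L : (ℤ →₀ ℤ) →+ Matrix (Fin m) (Fin m) (ZinvS S) :=
    Finsupp.liftAddHom (fun i => AddMonoidHom.mk'
      (fun n => n • ((A ^ i : (Matrix (Fin m) (Fin m) (ZinvS S))ˣ) :
        Matrix (Fin m) (Fin m) (ZinvS S))) (fun x y => add_smul x y _)) with hLdef
  have hLsum : (c.sum fun i n => n • ((A ^ i : (Matrix (Fin m) (Fin m) (ZinvS S))ˣ) :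
      Matrix (Fin m) (Fin m) (ZinvS S))) = L c := rfl
  rw [hLsum, hcdef, map_sub, map_sum]
  have hLsingle : ∀ (i : ℤ) (n : ℤ), L (Finsupp.single i n) =
      n • ((A ^ i : (Matrix (Fin m) (Fin m) (ZinvS S))ˣ) :
        Matrix (Fin m) (Fin m) (ZinvS S)) := by
    intro i n
    rw [hLdef, Finsupp.liftAddHom_apply_single]
    rfl
  simp only [hLsingle]
  apply hΦinj
  rw [map_sub, map_sum, map_zsmul]
  simp only [map_zsmul, hΦpow]
  have hRHS : Φ (Matrix.scalar (Fin m)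
      (⟨(p : ℚ)⁻¹, Subring.subset_closure ⟨p, hpS, rfl⟩⟩ : ZinvS S)) =
      Matrix.scalar (Fin m) ((p:ℚ)⁻¹) := by
    rw [Matrix.scalar_apply, Matrix.scalar_apply, hΦdef, RingHom.mapMatrix_apply,
      Matrix.diagonal_map (map_zero φ)]
    rfl
  rw [hRHS]
  -- now a pure ℚ-matrix identity
  set C0 : Matrix (Fin m) (Fin m) ℚ := ((𝔅 ^ (-(a:ℤ)) : (Matrix (Fin m) (Fin m) ℚ)ˣ) :
    Matrix (Fin m) (Fin m) ℚ) with hC0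
  have hpowa : ((𝔅 ^ ((a:ℤ)) : (Matrix (Fin m) (Fin m) ℚ)ˣ) :
      Matrix (Fin m) (Fin m) ℚ) = B ^ a := by
    rw [zpow_natCast, Units.val_pow_eq_pow_val, h𝔅val]
  have hBaC0 : B ^ a * C0 = 1 := by
    rw [← hpowa, hC0, ← Units.val_mul, ← zpow_add, add_neg_cancel, zpow_zero, Units.val_one]
  have hjpow : ∀ j : ℕ, ((𝔅 ^ ((j:ℤ) - (a:ℤ)) : (Matrix (Fin m) (Fin m) ℚ)ˣ) :
      Matrix (Fin m) (Fin m) ℚ) = B ^ j * C0 := by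
    intro j
    rw [sub_eq_add_neg, zpow_add, Units.val_mul, hC0, zpow_natCast,
      Units.val_pow_eq_pow_val, h𝔅val]
  have hzero : ((𝔅 ^ ((0:ℤ)) : (Matrix (Fin m) (Fin m) ℚ)ˣ) :
      Matrix (Fin m) (Fin m) ℚ) = 1 := by rw [zpow_zero, Units.val_one]
  rw [hzero]
  simp only [hjpow]
  -- LHS = T * C0
  have hsum3 : ∑ j ∈ erA, (u * y j) • (B ^ j * C0)
      = ((u:ℚ) • ∑ j ∈ erA, (y j : ℚ) • B ^ j) * C0 := by
    rw [Finset.smul_sum, Finset.sum_mul]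
    refine Finset.sum_congr rfl ?_
    intro j hj
    rw [smul_smul, smul_mul_assoc, ← Int.cast_smul_eq_zsmul ℚ]
    push_cast
    ring_nf
  have hLHS : (v • (1 : Matrix (Fin m) (Fin m) ℚ))
      - ∑ j ∈ erA, (u * y j) • (B ^ j * C0) = T * C0 := by
    rw [hsum3, ← hBaC0, hTdef, sub_mul, smul_mul_assoc, ← Int.cast_smul_eq_zsmul ℚ v,
      smul_mul_assoc]
  rw [hLHS]
  have hpne : (p:ℚ) ≠ 0 := by exact_mod_cast hp.ne_zero
  have hTform : T = (p:ℚ)⁻¹ • B ^ a := by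
    rw [hBa, smul_smul, inv_mul_cancel₀ hpne, one_smul]
  rw [hTform, smul_mul_assoc, hBaC0, Matrix.smul_one_eq_diagonal, Matrix.scalar_apply]
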